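/- Let c ∈ ℝ^L, Γ a positive definite L×L real matrix, A a real D×L matrix, b ∈ ℝ^D, and Σ a positive definite D×D real matrix. Set m = [c; A c + b] and V = [[Γ, ΓAᵀ], [AΓ, Σ + AΓAᵀ]]. Then for all x ∈ ℝ^L and y ∈ ℝ^D, writing u = [x; y], we have (u − m)ᵀ V⁻¹ (u − m) = (x − c)ᵀ Γ⁻¹ (x − c) + (y − A x − b)ᵀ Σ⁻¹ (y − A x − b). -/

import Mathlib

open Matrix

theorem gllim_joint_quadratic_decomposition {L D : ℕ} (hL : 0 < L) (hD : 0 < D)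
    (c : Fin L → ℝ) (Γ : Matrix (Fin L) (Fin L) ℝ)
    (A : Matrix (Fin D) (Fin L) ℝ) (b : Fin D → ℝ)
    (S : Matrix (Fin D) (Fin D) ℝ)
    (hΓ : Γ.PosDef) (hS : S.PosDef)
    (x : Fin L → ℝ) (y : Fin D → ℝ) :
    (Sum.elim x y - Sum.elim c (A *ᵥ c + b)) ⬝ᵥ
        (Matrix.fromBlocks Γ (Γ * Aᵀ) (A * Γ) (S + A * Γ * Aᵀ))⁻¹ *ᵥ
        (Sum.elim x y - Sum.elim c (A *ᵥ c + b)) =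
      (x - c) ⬝ᵥ Γ⁻¹ *ᵥ (x - c) +
        (y - A *ᵥ x - b) ⬝ᵥ S⁻¹ *ᵥ (y - A *ᵥ x - b) := by
  have hΓd : IsUnit Γ.det := isUnit_iff_ne_zero.mpr hΓ.det_pos.ne'
  have hSd : IsUnit S.det := isUnit_iff_ne_zero.mpr hS.det_pos.ne'
  have hΓ1 : Γ * Γ⁻¹ = 1 := Matrix.mul_nonsing_inv Γ hΓd
  have hS1 : S * S⁻¹ = 1 := Matrix.mul_nonsing_inv S hSd
  have hSA : S * (S⁻¹ * A) = A := by rw [← Matrix.mul_assoc, hS1, Matrix.one_mul]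
  have hVinv : (Matrix.fromBlocks Γ (Γ * Aᵀ) (A * Γ) (S + A * Γ * Aᵀ))⁻¹ =
      Matrix.fromBlocks (Γ⁻¹ + Aᵀ * S⁻¹ * A) (-(Aᵀ * S⁻¹)) (-(S⁻¹ * A)) S⁻¹ := by
    apply Matrix.inv_eq_right_inv
    rw [Matrix.fromBlocks_multiply, ← Matrix.fromBlocks_one]
    have e11 : Γ * (Γ⁻¹ + Aᵀ * S⁻¹ * A) + Γ * Aᵀ * -(S⁻¹ * A) = 1 := by
      simp [Matrix.mul_add, Matrix.mul_assoc, hΓ1]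
    have e12 : Γ * -(Aᵀ * S⁻¹) + Γ * Aᵀ * S⁻¹ = 0 := by
      simp [Matrix.mul_assoc]
    have e21 : A * Γ * (Γ⁻¹ + Aᵀ * S⁻¹ * A) + (S + A * Γ * Aᵀ) * -(S⁻¹ * A) = 0 := by
      simp [Matrix.mul_add, Matrix.add_mul, Matrix.mul_assoc, hΓ1, hSA]
    have e22 : A * Γ * -(Aᵀ * S⁻¹) + (S + A * Γ * Aᵀ) * S⁻¹ = 1 := by
      simp [Matrix.add_mul, Matrix.mul_assoc, hS1]
    rw [e11, e12, e21, e22]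
  have hsub : Sum.elim x y - Sum.elim c (A *ᵥ c + b) =
      Sum.elim (x - c) (y - (A *ᵥ c + b)) := by
    funext i; cases i <;> simp
  set d1 : Fin L → ℝ := x - c with hd1
  set d2 : Fin D → ℝ := y - (A *ᵥ c + b) with hd2
  have hyd : y - A *ᵥ x - b = d2 - A *ᵥ d1 := by
    simp [hd1, hd2, Matrix.mulVec_sub]
    abel
  have hSymm : Sᵀ = S := by
    have := hS.isHermitian.eq
    rwa [Matrix.conjTranspose_eq_transpose_of_trivial] at this
  have hSinvT : S⁻¹ᵀ = S⁻¹ := by rw [Matrix.transpose_nonsing_inv, hSymm]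
  have hvm : ∀ p : Fin D → ℝ, p ᵥ* S⁻¹ = S⁻¹ *ᵥ p := fun p => by
    rw [← Matrix.mulVec_transpose, hSinvT]
  have key : ∀ p q : Fin D → ℝ, p ⬝ᵥ S⁻¹ *ᵥ q = q ⬝ᵥ S⁻¹ *ᵥ p := fun p q => by
    rw [Matrix.dotProduct_mulVec, hvm, dotProduct_comm]
  have hswap : ∀ (u : Fin L → ℝ) (v : Fin D → ℝ),
      (A *ᵥ u) ⬝ᵥ S⁻¹ *ᵥ v = u ⬝ᵥ (Aᵀ * S⁻¹) *ᵥ v := by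
    intro u v
    rw [Matrix.dotProduct_mulVec, Matrix.dotProduct_mulVec, ← Matrix.vecMul_vecMul,
      Matrix.vecMul_transpose]
  have h1 : d1 ⬝ᵥ (Aᵀ * S⁻¹ * A) *ᵥ d1 = (A *ᵥ d1) ⬝ᵥ S⁻¹ *ᵥ (A *ᵥ d1) := by
    rw [hswap, Matrix.mulVec_mulVec, Matrix.mul_assoc]
  have h2 : d1 ⬝ᵥ (Aᵀ * S⁻¹) *ᵥ d2 = (A *ᵥ d1) ⬝ᵥ S⁻¹ *ᵥ d2 := (hswap d1 d2).symm
  have h3 : d2 ⬝ᵥ (S⁻¹ * A) *ᵥ d1 = d2 ⬝ᵥ S⁻¹ *ᵥ (A *ᵥ d1) := by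
    rw [← Matrix.mulVec_mulVec]
  rw [hsub, hVinv, hyd, Matrix.fromBlocks_mulVec, sumElim_dotProduct_sumElim]
  simp only [Sum.elim_comp_inl, Sum.elim_comp_inr, Matrix.add_mulVec, Matrix.neg_mulVec,
    Matrix.mulVec_sub, dotProduct_add, dotProduct_sub, dotProduct_neg,
    sub_dotProduct]
  rw [h1, h2, h3, key (A *ᵥ d1) d2]
  ring
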